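/- Let $(\lambda_n)_{n\ge2}$ be positive reals with $\sum_{n\ge2}\lambda_n^{-1}<\infty$ and $\lambda_n/\lambda_{n+1} \to \alpha \in [0,1)$. Let $X_i$ be independent Exp($\lambda_i$), $T_n=\sum_{i=n+1}^\infty X_i$, $A_n=\sum_{i=n+1}^\infty \lambda_i^{-1}$. Then for every $u \ge 0$, $\mathbb{E}[e^{-u T_n / A_n}] \to \prod_{i=0}^\infty \frac{1}{u\,\alpha^i(1-\alpha) + 1}$ as $n \to \infty$. -/

import Mathlib

set_option maxHeartbeats 1000000
open MeasureTheory ProbabilityTheory Filter Topology Real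
open scoped ENNReal NNReal

lemma laplace_expMeasure {r : ℝ} (hr : 0 < r) {s : ℝ} (hs : 0 ≤ s) :
    ∫ x, Real.exp (-(s * x)) ∂(expMeasure r) = (s / r + 1)⁻¹ := by
  have hmeas : Measurable fun x : ℝ => (exponentialPDFReal r x).toNNReal :=
    (measurable_exponentialPDFReal r).real_toNNReal
  have h1 : expMeasure r
      = volume.withDensity (fun x => ((exponentialPDFReal r x).toNNReal : ℝ≥0∞)) := rfl
  rw [h1, integral_withDensity_eq_integral_smul hmeas]
  have h2 : ∀ x : ℝ, (exponentialPDFReal r x).toNNReal • Real.exp (-(s * x))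
      = exponentialPDFReal r x * Real.exp (-(s * x)) := by
    intro x
    rw [NNReal.smul_def, smul_eq_mul, Real.coe_toNNReal _ (exponentialPDFReal_nonneg hr x)]
  simp_rw [h2]
  have h3 : ∀ x ∉ Set.Ici (0:ℝ), exponentialPDFReal r x * Real.exp (-(s * x)) = 0 := by
    intro x hx
    have : x < 0 := by simpa using hx
    simp [exponentialPDFReal, gammaPDFReal, not_le.mpr this]
  rw [← setIntegral_eq_integral_of_forall_compl_eq_zero h3,
    integral_Ici_eq_integral_Ioi]
  have h4 : ∀ x ∈ Set.Ioi (0:ℝ), exponentialPDFReal r x * Real.exp (-(s * x))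
      = r * Real.exp (-((r + s) * x)) := by
    intro x hx
    have hx0 : (0:ℝ) ≤ x := le_of_lt hx
    simp only [exponentialPDFReal, gammaPDFReal, if_pos hx0, Real.rpow_one, Real.Gamma_one,
      div_one, sub_self, Real.rpow_zero, mul_one]
    rw [mul_assoc, ← Real.exp_add]
    ring_nf
  rw [setIntegral_congr_fun measurableSet_Ioi h4, integral_const_mul]
  have hrs : 0 < r + s := by linarith
  have h5 : (∫ x in Set.Ioi (0:ℝ), Real.exp (-((r + s) * x)))
      = (r+s)⁻¹ * 1 := by
    have := integral_comp_mul_left_Ioi (fun y => Real.exp (-y)) 0 hrs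
    simp only [mul_zero, smul_eq_mul] at this
    rw [this, integral_exp_neg_Ioi_zero]
  rw [h5]
  rw [eq_comm, inv_eq_iff_eq_inv]
  field_simp
  ring

lemma X_nonneg {Ω : Type*} [MeasurableSpace Ω] (P : Measure Ω) [IsProbabilityMeasure P]
    (lam : ℕ → ℝ) (X : ℕ → Ω → ℝ) (hmeas : ∀ i, Measurable (X i))
    (hexp : ∀ i, Measure.map (X i) P = expMeasure (lam i)) :
    ∀ᵐ ω ∂P, ∀ i, 0 ≤ X i ω := by
  rw [ae_all_iff]
  intro i
  rw [ae_iff]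
  have h1 : {ω | ¬ 0 ≤ X i ω} = X i ⁻¹' Set.Iio 0 := by
    ext ω; simp [not_le]
  rw [h1, ← Measure.map_apply (hmeas i) measurableSet_Iio, hexp i]
  show (volume.withDensity (gammaPDF 1 (lam i))) (Set.Iio 0) = 0
  rw [withDensity_apply _ measurableSet_Iio]
  exact lintegral_gammaPDF_of_nonpos le_rfl

lemma laplace_T {Ω : Type*} [MeasurableSpace Ω]
    (P : Measure Ω) [IsProbabilityMeasure P]
    (lam : ℕ → ℝ) (hpos : ∀ n, 0 < lam n)
    (hsum : Summable fun n => (lam n)⁻¹)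
    (X : ℕ → Ω → ℝ) (hmeas : ∀ i, Measurable (X i))
    (hindep : iIndepFun X P)
    (hexp : ∀ i, Measure.map (X i) P = expMeasure (lam i))
    (T : ℕ → Ω → ℝ) (hTmeas : ∀ n, Measurable (T n))
    (hT : ∀ᵐ ω ∂P, ∀ n, HasSum (fun i => X (n + 1 + i) ω) (T n ω))
    (n : ℕ) {s : ℝ} (hs : 0 ≤ s) :
    ∫ ω, Real.exp (-(s * T n ω)) ∂P
      = Real.exp (-(∑' i, Real.log (s / lam (n + 1 + i) + 1))) := by
  have hinj : Function.Injective fun i : ℕ => n + 1 + i := fun a b h => by simpa using h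
  have hterm_pos : ∀ i, 0 < s / lam (n + 1 + i) + 1 := fun i => by
    have := div_nonneg hs (hpos (n + 1 + i)).le; linarith
  have hlog_nonneg : ∀ i, 0 ≤ Real.log (s / lam (n + 1 + i) + 1) := fun i =>
    Real.log_nonneg (by have := div_nonneg hs (hpos (n + 1 + i)).le; linarith)
  have hlog_le : ∀ i, Real.log (s / lam (n + 1 + i) + 1) ≤ s * (lam (n + 1 + i))⁻¹ := by
    intro i
    have := Real.log_le_sub_one_of_pos (hterm_pos i)
    calc Real.log (s / lam (n + 1 + i) + 1) ≤ s / lam (n + 1 + i) + 1 - 1 := this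
      _ = s * (lam (n + 1 + i))⁻¹ := by ring
  have hsum_tail : Summable fun i => (lam (n + 1 + i))⁻¹ := hsum.comp_injective hinj
  have hsum_log : Summable fun i => Real.log (s / lam (n + 1 + i) + 1) :=
    Summable.of_nonneg_of_le hlog_nonneg hlog_le (hsum_tail.mul_left s)
  -- finite product formula
  have hfin : ∀ N : ℕ, ∫ ω, Real.exp (-(s * ∑ i ∈ Finset.range N, X (n + 1 + i) ω)) ∂P
      = ∏ i ∈ Finset.range N, (s / lam (n + 1 + i) + 1)⁻¹ := by
    intro N
    have hmgf := hindep.mgf_sum hmeas ((Finset.range N).map ⟨fun i => n + 1 + i, hinj⟩) (t := -s)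
    have hL : mgf (∑ j ∈ (Finset.range N).map ⟨fun i => n + 1 + i, hinj⟩, X j) P (-s)
        = ∫ ω, Real.exp (-(s * ∑ i ∈ Finset.range N, X (n + 1 + i) ω)) ∂P := by
      unfold mgf
      congr 1
      ext ω
      simp [Finset.sum_apply, Finset.sum_map, neg_mul]
    have hR : ∀ j, mgf (X j) P (-s) = (s / lam j + 1)⁻¹ := by
      intro j
      unfold mgf
      have : ∫ ω, Real.exp (-s * X j ω) ∂P = ∫ x, Real.exp (-(s * x)) ∂(Measure.map (X j) P) := by
        rw [integral_map (hmeas j).aemeasurable]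
        · simp [neg_mul]
        · exact ((measurable_id.const_mul s).neg.exp).aestronglyMeasurable
      rw [show (fun ω => Real.exp (-s * X j ω)) = fun ω => Real.exp (-s * X j ω) from rfl]
      rw [show P[fun ω => Real.exp (-s * X j ω)] = ∫ ω, Real.exp (-s * X j ω) ∂P from rfl,
        this, hexp j, laplace_expMeasure (hpos j) hs]
    rw [hL, Finset.prod_map] at hmgf
    rw [hmgf]
    exact Finset.prod_congr rfl fun i _ => hR _
  -- finite product = exp of minus partial sum of logs
  have hfin' : ∀ N : ℕ, (∏ i ∈ Finset.range N, (s / lam (n + 1 + i) + 1)⁻¹)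
      = Real.exp (-(∑ i ∈ Finset.range N, Real.log (s / lam (n + 1 + i) + 1))) := by
    intro N
    rw [← Finset.sum_neg_distrib, Real.exp_sum]
    refine Finset.prod_congr rfl fun i _ => ?_
    rw [Real.exp_neg, Real.exp_log (hterm_pos i)]
  -- DCT
  have hXnn := X_nonneg P lam X hmeas hexp
  have hDCT : Tendsto (fun N => ∫ ω, Real.exp (-(s * ∑ i ∈ Finset.range N, X (n + 1 + i) ω)) ∂P)
      atTop (𝓝 (∫ ω, Real.exp (-(s * T n ω)) ∂P)) := by
    refine tendsto_integral_of_dominated_convergence (fun _ => (1:ℝ)) ?_ (integrable_const 1) ?_ ?_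
    · intro N
      exact (((Finset.measurable_sum (Finset.range N) fun i _ =>
        hmeas (n + 1 + i)).const_mul s).neg.exp).aestronglyMeasurable
    · intro N
      filter_upwards [hXnn] with ω hω
      have hsum0 : 0 ≤ ∑ i ∈ Finset.range N, X (n + 1 + i) ω :=
        Finset.sum_nonneg fun i _ => hω (n + 1 + i)
      rw [Real.norm_eq_abs, abs_of_pos (Real.exp_pos _)]
      exact Real.exp_le_one_iff.mpr (by nlinarith)
    · filter_upwards [hT] with ω hω
      exact (Real.continuous_exp.continuousAt.tendsto.comp
        (((hω n).tendsto_sum_nat.const_mul s).neg))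
  -- limit of RHS
  have hRHS : Tendsto (fun N => Real.exp (-(∑ i ∈ Finset.range N, Real.log (s / lam (n + 1 + i) + 1))))
      atTop (𝓝 (Real.exp (-(∑' i, Real.log (s / lam (n + 1 + i) + 1))))) :=
    Real.continuous_exp.continuousAt.tendsto.comp hsum_log.hasSum.tendsto_sum_nat.neg
  refine tendsto_nhds_unique hDCT ?_
  simp_rw [hfin, hfin']
  exact hRHS

lemma sum_tail (lam : ℕ → ℝ) (hsum : Summable fun n => (lam n)⁻¹) (n : ℕ) :
    Summable fun i => (lam (n + 1 + i))⁻¹ :=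
  hsum.comp_injective fun a b h => by simpa using h

lemma A_pos (lam : ℕ → ℝ) (hpos : ∀ n, 0 < lam n) (hsum : Summable fun n => (lam n)⁻¹)
    (A : ℕ → ℝ) (hA : ∀ n, A n = ∑' i : ℕ, (lam (n + 1 + i))⁻¹) (n : ℕ) : 0 < A n := by
  rw [hA n]
  exact Summable.tsum_pos (sum_tail lam hsum n) (fun i => (inv_nonneg.mpr (hpos _).le)) 0
    (inv_pos.mpr (hpos _))

lemma A_rec (lam : ℕ → ℝ) (hsum : Summable fun n => (lam n)⁻¹)
    (A : ℕ → ℝ) (hA : ∀ n, A n = ∑' i : ℕ, (lam (n + 1 + i))⁻¹) (n : ℕ) :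
    A n = (lam (n + 1))⁻¹ + A (n + 1) := by
  rw [hA n, hA (n + 1), Summable.tsum_eq_zero_add (sum_tail lam hsum n)]
  have h1 : ∑' (b : ℕ), (lam (n + 1 + (b + 1)))⁻¹ = ∑' i : ℕ, (lam (n + 1 + 1 + i))⁻¹ :=
    tsum_congr fun i => by rw [show n + 1 + (i + 1) = n + 1 + 1 + i from by omega]
  rw [h1]

lemma A_le (lam : ℕ → ℝ) (hpos : ∀ n, 0 < lam n) (hsum : Summable fun n => (lam n)⁻¹)
    (A : ℕ → ℝ) (hA : ∀ n, A n = ∑' i : ℕ, (lam (n + 1 + i))⁻¹) (n : ℕ) :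
    (lam (n + 1))⁻¹ ≤ A n := by
  rw [hA n]
  exact Summable.le_tsum (sum_tail lam hsum n) 0 fun j _ => inv_nonneg.mpr (hpos _).le

lemma lam_telescope (lam : ℕ → ℝ) (hpos : ∀ n, 0 < lam n) (n j : ℕ) :
    lam (n + 1) / lam (n + 1 + j) = ∏ t ∈ Finset.range j, lam (n + 1 + t) / lam (n + 1 + t + 1) := by
  induction j with
  | zero => simp [div_self (hpos (n + 1)).ne']
  | succ j ih =>
    rw [Finset.prod_range_succ, ← ih, div_mul_div_comm, mul_comm (lam (n + 1)) (lam (n + 1 + j)),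
      mul_div_mul_left _ _ (hpos (n + 1 + j)).ne']
    rfl

lemma ratio_tendsto (lam : ℕ → ℝ) (hpos : ∀ n, 0 < lam n) (α : ℝ)
    (hratio : Tendsto (fun n => lam n / lam (n + 1)) atTop (𝓝 α)) (j : ℕ) :
    Tendsto (fun n => lam (n + 1) / lam (n + 1 + j)) atTop (𝓝 (α ^ j)) := by
  have h1 : ∀ t : ℕ, Tendsto (fun n => lam (n + 1 + t) / lam (n + 1 + t + 1)) atTop (𝓝 α) := by
    intro t
    have h := hratio.comp (tendsto_add_atTop_nat (1 + t))
    refine h.congr fun n => ?_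
    simp only [Function.comp_apply]
    congr 2 <;> omega
  have h2 : Tendsto (fun n => ∏ t ∈ Finset.range j, lam (n + 1 + t) / lam (n + 1 + t + 1))
      atTop (𝓝 (∏ _t ∈ Finset.range j, α)) := tendsto_finset_prod _ fun t _ => h1 t
  rw [Finset.prod_const, Finset.card_range] at h2
  exact h2.congr fun n => (lam_telescope lam hpos n j).symm

lemma ratio_bound (lam : ℕ → ℝ) (hpos : ∀ n, 0 < lam n) (α : ℝ) (hα : α ∈ Set.Ico (0 : ℝ) 1)
    (hratio : Tendsto (fun n => lam n / lam (n + 1)) atTop (𝓝 α)) :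
    ∃ N : ℕ, ∀ n ≥ N, ∀ j : ℕ, lam (n + 1) / lam (n + 1 + j) ≤ ((α + 1) / 2) ^ j := by
  set β := (α + 1) / 2 with hβ
  have hαβ : α < β := by rw [hβ]; linarith [hα.2]
  obtain ⟨N, hN⟩ := eventually_atTop.mp (hratio.eventually (eventually_le_nhds hαβ))
  refine ⟨N, fun n hn j => ?_⟩
  rw [lam_telescope lam hpos n j]
  calc ∏ t ∈ Finset.range j, lam (n + 1 + t) / lam (n + 1 + t + 1)
      ≤ ∏ _t ∈ Finset.range j, β := by
        refine Finset.prod_le_prod (fun t _ => ?_) (fun t _ => ?_)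
        · exact div_nonneg (hpos _).le (hpos _).le
        · exact hN (n + 1 + t) (by omega)
    _ = β ^ j := by rw [Finset.prod_const, Finset.card_range]

lemma L_tendsto (lam : ℕ → ℝ) (hpos : ∀ n, 0 < lam n) (hsum : Summable fun n => (lam n)⁻¹)
    (A : ℕ → ℝ) (hA : ∀ n, A n = ∑' i : ℕ, (lam (n + 1 + i))⁻¹)
    (α : ℝ) (hα : α ∈ Set.Ico (0 : ℝ) 1)
    (hratio : Tendsto (fun n => lam n / lam (n + 1)) atTop (𝓝 α)) :
    Tendsto (fun n => lam (n + 1) * A n) atTop (𝓝 (1 - α)⁻¹) := by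
  set β := (α + 1) / 2 with hβ
  have hβ0 : (0:ℝ) ≤ β := by rw [hβ]; linarith [hα.1]
  have hβ1 : β < 1 := by rw [hβ]; linarith [hα.2]
  obtain ⟨N, hN⟩ := ratio_bound lam hpos α hα hratio
  have heq : ∀ n, lam (n + 1) * A n = ∑' j, lam (n + 1) / lam (n + 1 + j) := by
    intro n
    rw [hA n, ← tsum_mul_left]
    exact tsum_congr fun j => (div_eq_mul_inv _ _).symm
  have hmain : Tendsto (fun n => ∑' j, lam (n + 1) / lam (n + 1 + j)) atTop (𝓝 (∑' j, α ^ j)) := by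
    refine tendsto_tsum_of_dominated_convergence (summable_geometric_of_lt_one hβ0 hβ1)
      (fun j => ratio_tendsto lam hpos α hratio j) ?_
    filter_upwards [eventually_ge_atTop N] with n hn j
    rw [Real.norm_eq_abs, abs_of_nonneg (div_nonneg (hpos _).le (hpos _).le)]
    exact hN n hn j
  rw [tsum_geometric_of_lt_one hα.1 hα.2] at hmain
  exact hmain.congr fun n => (heq n).symm

lemma x_tendsto (lam : ℕ → ℝ) (hpos : ∀ n, 0 < lam n) (hsum : Summable fun n => (lam n)⁻¹)
    (A : ℕ → ℝ) (hA : ∀ n, A n = ∑' i : ℕ, (lam (n + 1 + i))⁻¹)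
    (α : ℝ) (hα : α ∈ Set.Ico (0 : ℝ) 1)
    (hratio : Tendsto (fun n => lam n / lam (n + 1)) atTop (𝓝 α)) (i : ℕ) :
    Tendsto (fun n => (lam (n + 1 + i) * A n)⁻¹) atTop (𝓝 (α ^ i * (1 - α))) := by
  have hL := L_tendsto lam hpos hsum A hA α hα hratio
  have h1α : (0:ℝ) < 1 - α := by linarith [hα.2]
  have hAp := A_pos lam hpos hsum A hA
  have hfact : ∀ n t : ℕ, A (n + t + 1) / A (n + t) = 1 - (lam (n + t + 1) * A (n + t))⁻¹ := by
    intro n t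
    have hrec := A_rec lam hsum A hA (n + t)
    have hl := (hpos (n + t + 1)).ne'
    have hA1 := (hAp (n + t + 1)).ne'
    have hden : (lam (n + t + 1))⁻¹ + A (n + t + 1) ≠ 0 := by
      have := hAp (n + t + 1); have := hpos (n + t + 1); positivity
    rw [hrec]
    have hpA := hAp (n + t + 1)
    have hpl := hpos (n + t + 1)
    field_simp
    ring
  have hxeq : ∀ n, (lam (n + 1 + i) * A n)⁻¹
      = (lam (n + i + 1) * A (n + i))⁻¹ * ∏ t ∈ Finset.range i, A (n + t + 1) / A (n + t) := by
    intro n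
    have htel : ∏ t ∈ Finset.range i, A (n + t + 1) / A (n + t) = A (n + i) / A n := by
      induction i with
      | zero => simp [div_self (hAp n).ne']
      | succ i ih =>
        rw [Finset.prod_range_succ, ih, div_mul_div_comm, mul_comm (A (n + i)) (A (n + i + 1)),
          mul_div_mul_right _ _ (hAp (n + i)).ne']
        rfl
    rw [htel, show n + 1 + i = n + i + 1 from by omega]
    have h1 := (hAp (n + i)).ne'
    have h2 := (hAp n).ne'
    have h3 := (hpos (n + i + 1)).ne'
    field_simp
  have hLt : ∀ t : ℕ, Tendsto (fun n => A (n + t + 1) / A (n + t)) atTop (𝓝 α) := by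
    intro t
    have hLs : Tendsto (fun n => lam (n + t + 1) * A (n + t)) atTop (𝓝 (1 - α)⁻¹) :=
      hL.comp (tendsto_add_atTop_nat t)
    have h := (hLs.inv₀ (inv_ne_zero h1α.ne')).const_sub 1
    rw [inv_inv, show (1 : ℝ) - (1 - α) = α from by ring] at h
    exact Tendsto.congr (fun n => (hfact n t).symm) h
  have hLi : Tendsto (fun n => (lam (n + i + 1) * A (n + i))⁻¹) atTop (𝓝 (1 - α)) := by
    have hLs : Tendsto (fun n => lam (n + i + 1) * A (n + i)) atTop (𝓝 (1 - α)⁻¹) :=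
      hL.comp (tendsto_add_atTop_nat i)
    have h := hLs.inv₀ (inv_ne_zero h1α.ne')
    rwa [inv_inv] at h
  have hprod : Tendsto (fun n => ∏ t ∈ Finset.range i, A (n + t + 1) / A (n + t))
      atTop (𝓝 (∏ _t ∈ Finset.range i, α)) := tendsto_finset_prod _ fun t _ => hLt t
  rw [Finset.prod_const, Finset.card_range] at hprod
  have h := hLi.mul hprod
  rw [mul_comm] at h
  exact Tendsto.congr (fun n => (hxeq n).symm) h

lemma log_tsum_tendsto (lam : ℕ → ℝ) (hpos : ∀ n, 0 < lam n) (hsum : Summable fun n => (lam n)⁻¹)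
    (A : ℕ → ℝ) (hA : ∀ n, A n = ∑' i : ℕ, (lam (n + 1 + i))⁻¹)
    (α : ℝ) (hα : α ∈ Set.Ico (0 : ℝ) 1)
    (hratio : Tendsto (fun n => lam n / lam (n + 1)) atTop (𝓝 α))
    {u : ℝ} (hu : 0 ≤ u) :
    Tendsto (fun n => ∑' i, Real.log (u * (lam (n + 1 + i) * A n)⁻¹ + 1)) atTop
      (𝓝 (∑' i, Real.log (u * α ^ i * (1 - α) + 1))) := by
  set β := (α + 1) / 2 with hβ
  have hβ0 : (0:ℝ) ≤ β := by rw [hβ]; linarith [hα.1]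
  have hβ1 : β < 1 := by rw [hβ]; linarith [hα.2]
  obtain ⟨N, hN⟩ := ratio_bound lam hpos α hα hratio
  have hAp := A_pos lam hpos hsum A hA
  have hbdd : ∀ n ≥ N, ∀ i, (lam (n + 1 + i) * A n)⁻¹ ≤ β ^ i := by
    intro n hn i
    have h1 : (lam (n + 1))⁻¹ ≤ A n := A_le lam hpos hsum A hA n
    have h2 : lam (n + 1 + i) * (lam (n + 1))⁻¹ ≤ lam (n + 1 + i) * A n :=
      mul_le_mul_of_nonneg_left h1 (hpos _).le
    calc (lam (n + 1 + i) * A n)⁻¹ ≤ (lam (n + 1 + i) * (lam (n + 1))⁻¹)⁻¹ := by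
          apply inv_anti₀
          · have := hpos (n + 1 + i); have := hpos (n + 1); positivity
          · exact h2
      _ = lam (n + 1) / lam (n + 1 + i) := by
          rw [mul_inv, inv_inv, mul_comm, div_eq_mul_inv]
      _ ≤ β ^ i := hN n hn i
  refine tendsto_tsum_of_dominated_convergence
    ((summable_geometric_of_lt_one hβ0 hβ1).mul_left u) (fun i => ?_) ?_
  · have hx := x_tendsto lam hpos hsum A hA α hα hratio i
    have hy : (0:ℝ) < u * (α ^ i * (1 - α)) + 1 := by
      have h0 : (0:ℝ) ≤ α ^ i * (1 - α) :=
        mul_nonneg (pow_nonneg hα.1 i) (by linarith [hα.2])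
      nlinarith
    have h := ((Real.continuousAt_log hy.ne').tendsto.comp (((hx.const_mul u)).add_const 1))
    rw [show u * (α ^ i * (1 - α)) + 1 = u * α ^ i * (1 - α) + 1 from by ring] at h
    exact h
  · filter_upwards [eventually_ge_atTop N] with n hn i
    have hx0 : 0 < (lam (n + 1 + i) * A n)⁻¹ := by
      have := hAp n; have := hpos (n + 1 + i); positivity
    have h1 : (0:ℝ) < u * (lam (n + 1 + i) * A n)⁻¹ + 1 := by nlinarith
    rw [Real.norm_eq_abs, abs_of_nonneg (Real.log_nonneg (by nlinarith))]
    calc Real.log (u * (lam (n + 1 + i) * A n)⁻¹ + 1)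
        ≤ u * (lam (n + 1 + i) * A n)⁻¹ + 1 - 1 := Real.log_le_sub_one_of_pos h1
      _ = u * (lam (n + 1 + i) * A n)⁻¹ := by ring
      _ ≤ u * β ^ i := mul_le_mul_of_nonneg_left (hbdd n hn i) hu

theorem hitting_time_laplace_limit {Ω : Type*} [MeasurableSpace Ω]
    (P : Measure Ω) [IsProbabilityMeasure P]
    (lam : ℕ → ℝ) (hpos : ∀ n, 0 < lam n)
    (hsum : Summable fun n => (lam n)⁻¹)
    (α : ℝ) (hα : α ∈ Set.Ico (0 : ℝ) 1)
    (hratio : Tendsto (fun n => lam n / lam (n + 1)) atTop (𝓝 α))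
    (X : ℕ → Ω → ℝ) (hmeas : ∀ i, Measurable (X i))
    (hindep : iIndepFun X P)
    (hexp : ∀ i, Measure.map (X i) P = expMeasure (lam i))
    (T : ℕ → Ω → ℝ) (hTmeas : ∀ n, Measurable (T n))
    (hT : ∀ᵐ ω ∂P, ∀ n, HasSum (fun i => X (n + 1 + i) ω) (T n ω))
    (A : ℕ → ℝ) (hA : ∀ n, A n = ∑' i : ℕ, (lam (n + 1 + i))⁻¹) :
    ∀ u : ℝ, 0 ≤ u →
      Tendsto (fun n => ∫ ω, Real.exp (-(u * T n ω) / A n) ∂P) atTop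
        (𝓝 (∏' i : ℕ, (u * α ^ i * (1 - α) + 1)⁻¹)) := by
  intro u hu
  have hAp := A_pos lam hpos hsum A hA
  have h1α : (0:ℝ) < 1 - α := by linarith [hα.2]
  have hstepA : ∀ n, ∫ ω, Real.exp (-(u * T n ω) / A n) ∂P
      = Real.exp (-(∑' i, Real.log (u * (lam (n + 1 + i) * A n)⁻¹ + 1))) := by
    intro n
    have hs : 0 ≤ u / A n := div_nonneg hu (hAp n).le
    have h1 : ∫ ω, Real.exp (-(u * T n ω) / A n) ∂P
        = ∫ ω, Real.exp (-((u / A n) * T n ω)) ∂P := by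
      refine integral_congr_ae (Filter.Eventually.of_forall fun ω => ?_)
      show Real.exp (-(u * T n ω) / A n) = Real.exp (-(u / A n * T n ω))
      rw [neg_div, mul_div_right_comm]
    rw [h1, laplace_T P lam hpos hsum X hmeas hindep hexp T hTmeas hT n hs]
    congr 1
    rw [neg_inj]
    refine tsum_congr fun i => ?_
    rw [div_div, div_eq_mul_inv, mul_comm (A n) (lam (n + 1 + i))]
  have hstepB := log_tsum_tendsto lam hpos hsum A hA α hα hratio hu
  have hstepB' : Tendsto (fun n => Real.exp (-(∑' i, Real.log (u * (lam (n + 1 + i) * A n)⁻¹ + 1))))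
      atTop (𝓝 (Real.exp (-(∑' i, Real.log (u * α ^ i * (1 - α) + 1))))) :=
    Real.continuous_exp.continuousAt.tendsto.comp hstepB.neg
  have hc : ∀ i : ℕ, 0 < u * α ^ i * (1 - α) + 1 := by
    intro i
    have h0 : (0:ℝ) ≤ u * α ^ i * (1 - α) :=
      mul_nonneg (mul_nonneg hu (pow_nonneg hα.1 i)) h1α.le
    linarith
  have hnn : ∀ i : ℕ, 0 ≤ Real.log (u * α ^ i * (1 - α) + 1) := by
    intro i
    have h0 : (0:ℝ) ≤ u * α ^ i * (1 - α) :=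
      mul_nonneg (mul_nonneg hu (pow_nonneg hα.1 i)) h1α.le
    exact Real.log_nonneg (by linarith)
  have hle : ∀ i : ℕ, Real.log (u * α ^ i * (1 - α) + 1) ≤ u * (1 - α) * α ^ i := by
    intro i
    calc Real.log (u * α ^ i * (1 - α) + 1)
        ≤ u * α ^ i * (1 - α) + 1 - 1 := Real.log_le_sub_one_of_pos (hc i)
      _ = u * (1 - α) * α ^ i := by ring
  have hsl : Summable fun i => Real.log (u * α ^ i * (1 - α) + 1) :=
    Summable.of_nonneg_of_le hnn hle
      ((summable_geometric_of_lt_one hα.1 hα.2).mul_left (u * (1 - α)))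
  have hprod : HasProd (fun i : ℕ => (u * α ^ i * (1 - α) + 1)⁻¹)
      ((Real.exp (∑' i, Real.log (u * α ^ i * (1 - α) + 1)))⁻¹) := by
    have h := (hsl.hasSum.neg).rexp
    simp only [Function.comp_def, Real.exp_neg, Real.exp_log (hc _)] at h
    exact h
  rw [hprod.tprod_eq, ← Real.exp_neg]
  exact hstepB'.congr fun n => (hstepA n).symm
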